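/- For all positive integers n and j, the sets G_{n,j} and S_{n,j} have the same cardinality. -/

import Mathlib

/-- The parity function: `P k = 0` if `k` is even and `P k = 1` if `k` is odd. -/
def P (m : ℤ) : ℤ := if Even m then 0 else 1

/-- The map `g` of the bijection: `γ = (γ₁, …, γ_j) ↦ (π, ν)` where
`π_k = γ_k + 4k - 2j - 2 + P(γ_k) + 2 ∑_{i=k+1}^j P(γ_i)` and `ν` contains the part
`2k - 1` exactly for those `k` with `γ_k` odd.  (Indices here are 0-based, so the
`k`-th entry of the tuple, `k : Fin j`, is the `(k+1)`-st part.) -/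
def gMap (j : ℕ) (γ : Fin j → ℤ) : (Fin j → ℤ) × Finset ℤ :=
  (fun k => γ k + 4 * ((k : ℤ) + 1) - 2 * j - 2 + P (γ k)
      + 2 * ∑ i ∈ Finset.Ioi k, P (γ i),
   Finset.image (fun k : Fin j => 2 * (k : ℤ) + 1)
     (Finset.univ.filter fun k => Odd (γ k)))

/-- The inverse map `h`: `(π, ν) ↦ γ` where
`γ_k = π_k - 4k + 2j + 2 - f_{2k-1} - 2 ∑_{i=k+1}^j f_{2i-1}`, `f_{2k-1}` being the
multiplicity (0 or 1) of the part `2k - 1` in `ν`. -/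
def hMap (j : ℕ) (σ : (Fin j → ℤ) × Finset ℤ) : Fin j → ℤ :=
  fun k => σ.1 k - 4 * ((k : ℤ) + 1) + 2 * (j : ℤ) + 2
    - (if 2 * (k : ℤ) + 1 ∈ σ.2 then 1 else 0)
    - 2 * ∑ i ∈ Finset.Ioi k, (if 2 * (i : ℤ) + 1 ∈ σ.2 then 1 else 0)

/-- `Gset n j` : Göllnitz–Gordon partitions of `n` with exactly `j` parts, as
weakly decreasing `j`-tuples `γ` of positive integers with `γ_i - γ_{i+1} ≥ 2`,
and `γ_i - γ_{i+1} ≥ 3` whenever `γ_i` is even. -/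
def Gset (n j : ℕ) : Set (Fin j → ℤ) :=
  {γ | (∀ k, 1 ≤ γ k) ∧
    (∀ i : ℕ, ∀ h : i + 1 < j,
      2 ≤ γ ⟨i, Nat.lt_of_succ_lt h⟩ - γ ⟨i + 1, h⟩ ∧
      (Even (γ ⟨i, Nat.lt_of_succ_lt h⟩) → 3 ≤ γ ⟨i, Nat.lt_of_succ_lt h⟩ - γ ⟨i + 1, h⟩)) ∧
    ∑ k, γ k = (n : ℤ)}

/-- `Sset n j` : signed Göllnitz–Gordon partitions of `n` whose positive
subpartition `π` has exactly `j` parts: `π` is a weakly decreasing `j`-tuple of even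
parts, each at least `2j`, and the negative subpartition `ν` is a set of distinct odd
positive parts, each at most `2j - 1` (hence there are at most `j` of them), with
`|π| - |ν| = n`. -/
def Sset (n j : ℕ) : Set ((Fin j → ℤ) × Finset ℤ) :=
  {σ | Antitone σ.1 ∧ (∀ k, 1 ≤ σ.1 k) ∧
    (∀ k, Even (σ.1 k) ∧ 2 * (j : ℤ) ≤ σ.1 k) ∧
    σ.2.card ≤ j ∧
    (∀ m ∈ σ.2, Odd m ∧ 1 ≤ m ∧ m ≤ 2 * (j : ℤ) - 1) ∧
    (∑ k, σ.1 k) - (∑ m ∈ σ.2, m) = (n : ℤ)}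

open Finset

/-! ### Auxiliary lemmas -/

lemma P_odd {m : ℤ} (h : Odd m) : P m = 1 := by
  simp [P, Int.not_odd_iff_even, h]

lemma P_even {m : ℤ} (h : Even m) : P m = 0 := by simp [P, h]

lemma mem_gnu {j : ℕ} (γ : Fin j → ℤ) (k : Fin j) :
    (2 * (k : ℤ) + 1 ∈ (gMap j γ).2) ↔ Odd (γ k) := by
  simp only [gMap, Finset.mem_image, Finset.mem_filter, Finset.mem_univ, true_and]
  constructor
  · rintro ⟨a, ha, hak⟩
    have h2 : a = k := Fin.ext (by omega)
    rwa [h2] at ha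
  · exact fun h => ⟨k, h, rfl⟩

lemma ind_eq_P {j : ℕ} (γ : Fin j → ℤ) (k : Fin j) :
    (if 2 * (k : ℤ) + 1 ∈ (gMap j γ).2 then (1:ℤ) else 0) = P (γ k) := by
  simp only [mem_gnu]
  rcases Int.even_or_odd (γ k) with h | h
  · simp [P_even h, Int.not_odd_iff_even.mpr h]
  · simp [P_odd h, h]

lemma hg (j : ℕ) (γ : Fin j → ℤ) : hMap j (gMap j γ) = γ := by
  funext k
  simp only [hMap]
  rw [ind_eq_P, Finset.sum_congr rfl (fun i _ => ind_eq_P γ i)]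
  show (gMap j γ).1 k - _ + _ + _ - _ - _ = γ k
  simp only [gMap]
  ring

lemma Ioi_succ_insert {j : ℕ} (i : ℕ) (h : i + 1 < j) :
    (Finset.Ioi (⟨i, Nat.lt_of_succ_lt h⟩ : Fin j)) =
      insert (⟨i + 1, h⟩ : Fin j) (Finset.Ioi (⟨i + 1, h⟩ : Fin j)) := by
  ext x
  simp only [Finset.mem_Ioi, Finset.mem_insert, Fin.lt_def, Fin.ext_iff]
  omega

lemma Ioi_last_empty {j : ℕ} (h : j - 1 < j) :
    (Finset.Ioi (⟨j - 1, h⟩ : Fin j)) = ∅ := by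
  ext x
  simp only [Finset.mem_Ioi, Finset.notMem_empty, iff_false, Fin.lt_def]
  omega

lemma two_sum_id (j : ℕ) : 2 * ∑ k : Fin j, (k : ℤ) = j * (j - 1) := by
  induction j with
  | zero => simp
  | succ m ih =>
    rw [Fin.sum_univ_castSucc]
    simp only [Fin.coe_castSucc, Fin.val_last]
    push_cast
    push_cast at ih
    linarith

lemma sum_lin (j : ℕ) : ∑ k : Fin j, (4 * ((k : ℤ) + 1) - 2 * j - 2) = 0 := by
  have h := two_sum_id j
  have h2 : ∑ k : Fin j, (4 * ((k : ℤ) + 1) - 2 * j - 2) =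
      2 * (2 * ∑ k : Fin j, (k : ℤ)) + ∑ _k : Fin j, (2 - 2 * (j : ℤ)) := by
    rw [Finset.mul_sum, Finset.mul_sum, ← Finset.sum_add_distrib]
    exact Finset.sum_congr rfl fun k _ => by ring
  rw [h2, h, Finset.sum_const]
  simp
  ring

lemma sum_double {j : ℕ} (a : Fin j → ℤ) :
    ∑ k, a k + 2 * ∑ k : Fin j, ∑ i ∈ Finset.Ioi k, a i
      = ∑ k : Fin j, (2 * (k : ℤ) + 1) * a k := by
  have hswap : ∑ k : Fin j, ∑ i ∈ Finset.Ioi k, a i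
      = ∑ i : Fin j, (i : ℤ) * a i := by
    rw [Finset.sum_comm' (t' := Finset.univ) (s' := fun i => Finset.Iio i)
      (by intro x y; simp [Finset.mem_Ioi, Finset.mem_Iio])]
    refine Finset.sum_congr rfl fun i _ => ?_
    rw [Finset.sum_const, Fin.card_Iio]
    simp [mul_comm]
  rw [hswap, Finset.mul_sum, ← Finset.sum_add_distrib]
  exact Finset.sum_congr rfl fun k _ => by ring

lemma antitone_of_consec {j : ℕ} {f : Fin j → ℤ}
    (h : ∀ i : ℕ, ∀ hi : i + 1 < j, f ⟨i + 1, hi⟩ ≤ f ⟨i, Nat.lt_of_succ_lt hi⟩) :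
    Antitone f := by
  have key : ∀ b : ℕ, ∀ hb : b < j, ∀ a : ℕ, ∀ ha : a < j, a ≤ b →
      f ⟨b, hb⟩ ≤ f ⟨a, ha⟩ := by
    intro b
    induction b with
    | zero =>
      intro hb a ha hab
      obtain rfl : a = 0 := by omega
      exact le_refl _
    | succ m ih =>
      intro hb a ha hab
      rcases Nat.eq_or_lt_of_le hab with heq | hlt
      · subst heq; exact le_refl _
      · exact le_trans (h m hb) (ih (Nat.lt_of_succ_lt hb) a ha (by omega))
  intro x y hxy
  exact key y.1 y.2 x.1 x.2 hxy

lemma g_diff {j : ℕ} (γ : Fin j → ℤ) (i : ℕ) (hi : i + 1 < j) :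
    (gMap j γ).1 ⟨i, Nat.lt_of_succ_lt hi⟩ - (gMap j γ).1 ⟨i + 1, hi⟩
      = (γ ⟨i, Nat.lt_of_succ_lt hi⟩ - γ ⟨i + 1, hi⟩) - 4
        + P (γ ⟨i, Nat.lt_of_succ_lt hi⟩) + P (γ ⟨i + 1, hi⟩) := by
  simp only [gMap]
  rw [Ioi_succ_insert i hi, Finset.sum_insert (by simp)]
  push_cast
  ring

lemma h_diff {j : ℕ} (σ : (Fin j → ℤ) × Finset ℤ) (i : ℕ) (hi : i + 1 < j) :
    hMap j σ ⟨i, Nat.lt_of_succ_lt hi⟩ - hMap j σ ⟨i + 1, hi⟩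
      = (σ.1 ⟨i, Nat.lt_of_succ_lt hi⟩ - σ.1 ⟨i + 1, hi⟩) + 4
        - (if 2 * ((i : ℤ)) + 1 ∈ σ.2 then 1 else 0)
        - (if 2 * ((i : ℤ) + 1) + 1 ∈ σ.2 then 1 else 0) := by
  simp only [hMap]
  rw [Ioi_succ_insert i hi, Finset.sum_insert (by simp)]
  push_cast
  ring

lemma g_mem {n j : ℕ} (hj : 0 < j) {γ : Fin j → ℤ} (hγ : γ ∈ Gset n j) :
    gMap j γ ∈ Sset n j := by
  obtain ⟨hpos, hgap, hsum⟩ := hγ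
  have hdiff : ∀ i : ℕ, ∀ hi : i + 1 < j,
      (gMap j γ).1 ⟨i + 1, hi⟩ ≤ (gMap j γ).1 ⟨i, Nat.lt_of_succ_lt hi⟩ := by
    intro i hi
    have hd := g_diff γ i hi
    obtain ⟨h2, h3⟩ := hgap i hi
    rcases Int.even_or_odd (γ ⟨i, Nat.lt_of_succ_lt hi⟩) with he | ho
    · rcases Int.even_or_odd (γ ⟨i + 1, hi⟩) with he' | ho'
      · have hev : Even (γ ⟨i, Nat.lt_of_succ_lt hi⟩ - γ ⟨i + 1, hi⟩) := he.sub he'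
        obtain ⟨c, hc⟩ := hev
        have h4 : 4 ≤ γ ⟨i, Nat.lt_of_succ_lt hi⟩ - γ ⟨i + 1, hi⟩ := by
          have := h3 he; omega
        rw [P_even he, P_even he'] at hd; linarith
      · have := h3 he
        rw [P_even he, P_odd ho'] at hd; linarith
    · rcases Int.even_or_odd (γ ⟨i + 1, hi⟩) with he' | ho'
      · have hev : Odd (γ ⟨i, Nat.lt_of_succ_lt hi⟩ - γ ⟨i + 1, hi⟩) := ho.sub_even he'
        obtain ⟨c, hc⟩ := hev
        have h4 : 3 ≤ γ ⟨i, Nat.lt_of_succ_lt hi⟩ - γ ⟨i + 1, hi⟩ := by omega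
        rw [P_odd ho, P_even he'] at hd; linarith
      · rw [P_odd ho, P_odd ho'] at hd; linarith
  have hanti : Antitone (gMap j γ).1 := antitone_of_consec hdiff
  have hlastlt : j - 1 < j := by omega
  have hπlast : 2 * (j : ℤ) ≤ (gMap j γ).1 ⟨j - 1, hlastlt⟩ := by
    have hgp : 2 ≤ γ ⟨j - 1, hlastlt⟩ + P (γ ⟨j - 1, hlastlt⟩) := by
      rcases Int.even_or_odd (γ ⟨j - 1, hlastlt⟩) with he | ho
      · have := hpos ⟨j - 1, hlastlt⟩
        rw [P_even he]; obtain ⟨c, hc⟩ := he; omega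
      · have := hpos ⟨j - 1, hlastlt⟩
        rw [P_odd ho]; omega
    show 2 * (j : ℤ) ≤ γ _ + 4 * (((⟨j - 1, hlastlt⟩ : Fin j) : ℤ) + 1) - 2 * j - 2
        + P (γ _) + 2 * ∑ i ∈ Finset.Ioi (⟨j - 1, hlastlt⟩ : Fin j), P (γ i)
    rw [Ioi_last_empty hlastlt, Finset.sum_empty]
    have hcast : (((⟨j - 1, hlastlt⟩ : Fin j) : ℕ) : ℤ) = (j : ℤ) - 1 := by
      simp only [Fin.val_mk]; omega
    rw [hcast]
    linarith
  have hbound : ∀ k, 2 * (j : ℤ) ≤ (gMap j γ).1 k := by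
    intro k
    exact le_trans hπlast (hanti (show k ≤ ⟨j - 1, hlastlt⟩ by
      rw [Fin.le_def]; have := k.2; simp only [Fin.val_mk]; omega))
  refine ⟨hanti, ?_, ?_, ?_, ?_, ?_⟩
  · intro k; have := hbound k; have : (1 : ℤ) ≤ 2 * (j : ℤ) := by omega
    linarith [hbound k]
  · intro k
    refine ⟨?_, hbound k⟩
    show Even (γ k + 4 * ((k : ℤ) + 1) - 2 * j - 2 + P (γ k)
        + 2 * ∑ i ∈ Finset.Ioi k, P (γ i))
    rcases Int.even_or_odd (γ k) with he | ho
    · rw [P_even he, Int.even_iff]; rw [Int.even_iff] at he; omega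
    · rw [P_odd ho, Int.even_iff]; rw [Int.odd_iff] at ho; omega
  · show (Finset.image _ _).card ≤ j
    exact le_trans Finset.card_image_le
      (le_trans (Finset.card_filter_le _ _) (by simp))
  · intro m hm
    simp only [gMap, Finset.mem_image, Finset.mem_filter, Finset.mem_univ,
      true_and] at hm
    obtain ⟨k, _, rfl⟩ := hm
    have hk := k.2
    refine ⟨⟨(k : ℤ), by ring⟩, by omega, by omega⟩
  · have hν : ∑ m ∈ (gMap j γ).2, m = ∑ k : Fin j, (2 * (k : ℤ) + 1) * P (γ k) := by
      show ∑ m ∈ Finset.image _ _, m = _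
      rw [Finset.sum_image (by intro a _ b _ hab; exact Fin.ext (by simp only at hab; omega)),
        Finset.sum_filter]
      refine Finset.sum_congr rfl fun k _ => ?_
      rcases Int.even_or_odd (γ k) with he | ho
      · simp [P_even he, Int.not_odd_iff_even.mpr he]
      · simp [P_odd ho, ho]
    have hπ : ∑ k, (gMap j γ).1 k
        = (n : ℤ) + ∑ k : Fin j, (2 * (k : ℤ) + 1) * P (γ k) := by
      show ∑ k : Fin j, (γ k + 4 * ((k : ℤ) + 1) - 2 * j - 2 + P (γ k)
          + 2 * ∑ i ∈ Finset.Ioi k, P (γ i)) = _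
      have expand : ∑ k : Fin j, (γ k + 4 * ((k : ℤ) + 1) - 2 * j - 2 + P (γ k)
            + 2 * ∑ i ∈ Finset.Ioi k, P (γ i))
          = ∑ k, γ k + ∑ k : Fin j, (4 * ((k : ℤ) + 1) - 2 * j - 2)
            + (∑ k, P (γ k) + 2 * ∑ k : Fin j, ∑ i ∈ Finset.Ioi k, P (γ i)) := by
        rw [Finset.mul_sum, ← Finset.sum_add_distrib, ← Finset.sum_add_distrib,
          ← Finset.sum_add_distrib]
        exact Finset.sum_congr rfl fun k _ => by ring
      rw [expand, hsum, sum_lin, sum_double]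
      ring
    rw [hπ, hν]; ring

lemma nu_eq_image {j : ℕ} {ν : Finset ℤ}
    (hmem : ∀ m ∈ ν, Odd m ∧ 1 ≤ m ∧ m ≤ 2 * (j : ℤ) - 1) :
    ν = Finset.image (fun k : Fin j => 2 * (k : ℤ) + 1)
      (Finset.univ.filter fun k => 2 * (k : ℤ) + 1 ∈ ν) := by
  ext m
  simp only [Finset.mem_image, Finset.mem_filter, Finset.mem_univ, true_and]
  constructor
  · intro hm
    obtain ⟨⟨c, hc⟩, h1, h2⟩ := hmem m hm
    have hjN : c.toNat < j := by omega
    have hval : 2 * (((⟨c.toNat, hjN⟩ : Fin j) : ℕ) : ℤ) + 1 = m := by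
      simp only [Fin.val_mk]; omega
    exact ⟨⟨c.toNat, hjN⟩, by rw [hval]; exact hm, hval⟩
  · rintro ⟨k, hk, rfl⟩; exact hk

lemma h_parity {j : ℕ} (σ : (Fin j → ℤ) × Finset ℤ) (k : Fin j)
    (hev : Even (σ.1 k)) : Even (hMap j σ k) ↔ 2 * (k : ℤ) + 1 ∉ σ.2 := by
  simp only [hMap]
  rw [Int.even_iff] at hev
  by_cases hm : 2 * (k : ℤ) + 1 ∈ σ.2
  · simp only [hm, if_true, not_true_eq_false, iff_false, Int.even_iff]
    omega
  · simp only [hm, if_false, not_false_eq_true, iff_true, Int.even_iff]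
    omega

lemma h_mem {n j : ℕ} (_hj : 0 < j) {σ : (Fin j → ℤ) × Finset ℤ}
    (hσ : σ ∈ Sset n j) : hMap j σ ∈ Gset n j := by
  obtain ⟨hanti, hpos, hev, hcard, hmem, hsum⟩ := hσ
  have hd0 : ∀ k : Fin j, (0:ℤ) ≤ (if 2 * (k : ℤ) + 1 ∈ σ.2 then (1:ℤ) else 0) :=
    fun k => by split <;> norm_num
  have hd1 : ∀ k : Fin j, (if 2 * (k : ℤ) + 1 ∈ σ.2 then (1:ℤ) else 0) ≤ 1 :=
    fun k => by split <;> norm_num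
  have hT : ∀ k : Fin j,
      ∑ i ∈ Finset.Ioi k, (if 2 * (i : ℤ) + 1 ∈ σ.2 then (1:ℤ) else 0)
        ≤ ((j - 1 - (k : ℕ) : ℕ) : ℤ) := by
    intro k
    have h := Finset.sum_le_card_nsmul (Finset.Ioi k)
      (fun i => if 2 * (i : ℤ) + 1 ∈ σ.2 then (1:ℤ) else 0) 1 (fun x _ => hd1 x)
    rwa [Fin.card_Ioi, nsmul_eq_mul, mul_one] at h
  have hT0 : ∀ k : Fin j,
      (0:ℤ) ≤ ∑ i ∈ Finset.Ioi k, (if 2 * (i : ℤ) + 1 ∈ σ.2 then (1:ℤ) else 0) :=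
    fun k => Finset.sum_nonneg fun i _ => hd0 i
  refine ⟨?_, ?_, ?_⟩
  · intro k
    have h2j := (hev k).2
    have hk := k.2
    have h1 := hT k; have h2 := hT0 k; have h3 := hd0 k; have h4 := hd1 k
    have hc : ((j - 1 - (k : ℕ) : ℕ) : ℤ) = (j : ℤ) - 1 - ((k : ℕ) : ℤ) := by omega
    rw [hc] at h1
    have hk' : ((k : ℕ) : ℤ) ≤ (j : ℤ) - 1 := by omega
    simp only [hMap]
    linarith
  · intro i hi
    have hΔ := h_diff σ i hi
    have hmono : σ.1 ⟨i + 1, hi⟩ ≤ σ.1 ⟨i, Nat.lt_of_succ_lt hi⟩ :=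
      hanti (by rw [Fin.le_def]; simp only [Fin.val_mk]; omega)
    have hA0 : (0:ℤ) ≤ (if 2 * ((i:ℕ) : ℤ) + 1 ∈ σ.2 then (1:ℤ) else 0) := by
      split <;> norm_num
    have hA1 : (if 2 * ((i:ℕ) : ℤ) + 1 ∈ σ.2 then (1:ℤ) else 0) ≤ 1 := by
      split <;> norm_num
    have hB0 : (0:ℤ) ≤ (if 2 * ((i:ℕ) + 1 : ℤ) + 1 ∈ σ.2 then (1:ℤ) else 0) := by
      split <;> norm_num
    have hB1 : (if 2 * ((i:ℕ) + 1 : ℤ) + 1 ∈ σ.2 then (1:ℤ) else 0) ≤ 1 := by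
      split <;> norm_num
    constructor
    · rw [hΔ]; linarith
    · intro heven
      have hpe := (hev ⟨i, Nat.lt_of_succ_lt hi⟩).1
      have hnotmem : 2 * ((⟨i, Nat.lt_of_succ_lt hi⟩ : Fin j) : ℤ) + 1 ∉ σ.2 :=
        (h_parity σ _ hpe).mp heven
      have hnot : 2 * ((i:ℕ) : ℤ) + 1 ∉ σ.2 := by
        simpa only [Fin.val_mk] using hnotmem
      rw [hΔ, if_neg hnot]
      linarith
  · have hνs : ∑ m ∈ σ.2, m
        = ∑ k : Fin j, (2 * (k : ℤ) + 1) * (if 2 * (k : ℤ) + 1 ∈ σ.2 then 1 else 0) := by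
      conv_lhs => rw [nu_eq_image hmem]
      rw [Finset.sum_image (fun a _ b _ hab => Fin.ext (by omega)), Finset.sum_filter]
      exact Finset.sum_congr rfl fun k _ => by split <;> simp
    have hfun : ∀ k : Fin j, hMap j σ k
        = σ.1 k - (4 * ((k : ℤ) + 1) - 2 * j - 2)
          - ((if 2 * (k : ℤ) + 1 ∈ σ.2 then 1 else 0)
            + 2 * ∑ i ∈ Finset.Ioi k, (if 2 * (i : ℤ) + 1 ∈ σ.2 then (1:ℤ) else 0)) :=
      fun k => by simp only [hMap]; ring
    rw [Finset.sum_congr rfl (fun k _ => hfun k), Finset.sum_sub_distrib,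
      Finset.sum_sub_distrib, sum_lin, Finset.sum_add_distrib, ← Finset.mul_sum,
      sum_double, ← hνs]
    linarith

lemma gh {n j : ℕ} {σ : (Fin j → ℤ) × Finset ℤ} (hσ : σ ∈ Sset n j) :
    gMap j (hMap j σ) = σ := by
  obtain ⟨hanti, hpos, hev, hcard, hmem, hsum⟩ := hσ
  have hPd : ∀ k : Fin j,
      P (hMap j σ k) = (if 2 * (k : ℤ) + 1 ∈ σ.2 then (1:ℤ) else 0) := by
    intro k
    by_cases hm : 2 * (k : ℤ) + 1 ∈ σ.2
    · rw [if_pos hm, P_odd (Int.not_even_iff_odd.mp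
        (fun he => (h_parity σ k (hev k).1).mp he hm))]
    · rw [if_neg hm, P_even ((h_parity σ k (hev k).1).mpr hm)]
  refine Prod.ext ?_ ?_
  · funext k
    show hMap j σ k + 4 * ((k : ℤ) + 1) - 2 * j - 2 + P (hMap j σ k)
        + 2 * ∑ i ∈ Finset.Ioi k, P (hMap j σ i) = σ.1 k
    rw [hPd, Finset.sum_congr rfl (fun i _ => hPd i)]
    simp only [hMap]
    ring
  · show Finset.image _ (Finset.univ.filter fun k => Odd (hMap j σ k)) = σ.2
    have hfil : (Finset.univ.filter fun k : Fin j => Odd (hMap j σ k))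
        = Finset.univ.filter fun k : Fin j => 2 * (k : ℤ) + 1 ∈ σ.2 := by
      apply Finset.filter_congr
      intro k _
      rw [← Int.not_even_iff_odd, h_parity σ k (hev k).1, not_not]
    rw [hfil, ← nu_eq_image hmem]

/-- For all positive `n` and `j`, the sets `G_{n,j}` and `S_{n,j}` have the same
cardinality. -/
theorem card_Gset_eq_card_Sset (n j : ℕ) (hn : 0 < n) (hj : 0 < j) :
    Nat.card (Gset n j) = Nat.card (Sset n j) := by
  have hbij : Set.BijOn (gMap j) (Gset n j) (Sset n j) := by
    refine ⟨fun γ hγ => g_mem hj hγ, ?_, ?_⟩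
    · intro a _ b _ hab
      have h := congrArg (hMap j) hab
      rwa [hg, hg] at h
    · intro σ hσ
      exact ⟨hMap j σ, h_mem hj hσ, gh hσ⟩
  exact Nat.card_congr (Set.BijOn.equiv _ hbij)
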